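/- arXiv:1603.07214 — 4 statements merged into one kernel-verified Lean document; each statement's English description precedes it below -/
import Mathlib

section
/- Let g ∈ SL(V) where V = ℝ^d is Euclidean, let κ₁(g) ≥ κ₂(g) ≥ … be the singular values of g, set κ_{1,2}(g) = κ₂(g)/κ₁(g). With Y_g^m the line in V* spanned by the top row of a Cartan decomposition of g, for any nonzero x ∈ V with X = ℝx one has δ(X, Y_g^m) ≤ ‖gx‖/(‖g‖‖x‖) ≤ δ(X, Y_g^m) + κ_{1,2}(g), where δ(ℝx, ℝφ) = |φ(x)|/(‖φ‖‖x‖). -/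
noncomputable section

/-- Operator norm realization of a real `d×d` matrix acting on Euclidean space. -/
def op {d : ℕ} (g : Matrix (Fin d) (Fin d) ℝ) :
    EuclideanSpace ℝ (Fin d) →L[ℝ] EuclideanSpace ℝ (Fin d) :=
  Matrix.toEuclideanCLM (𝕜 := ℝ) g


open RealInnerProductSpace

lemma op_mul {d : ℕ} (A B : Matrix (Fin d) (Fin d) ℝ) (x : EuclideanSpace ℝ (Fin d)) :
    op (A * B) x = op A (op B x) := by
  simp only [op, map_mul]; rfl

lemma op_apply {d : ℕ} (A : Matrix (Fin d) (Fin d) ℝ) (x : EuclideanSpace ℝ (Fin d)) (i : Fin d) :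
    op A x i = A.mulVec x i := rfl

lemma op_isometry {d : ℕ} {k : Matrix (Fin d) (Fin d) ℝ}
    (hk : k ∈ Matrix.orthogonalGroup (Fin d) ℝ) (x : EuclideanSpace ℝ (Fin d)) :
    ‖op k x‖ = ‖x‖ := by
  have h1 : star k * k = 1 := hk.1
  have hfix : star (op k) (op k x) = x := by
    rw [show star (op k) = op (star k) from (map_star (Matrix.toEuclideanCLM (𝕜 := ℝ)) k).symm,
      ← op_mul, h1]
    simp [op]
  have h2 : ⟪op k x, op k x⟫ = ⟪x, x⟫ := by
    have h := ContinuousLinearMap.adjoint_inner_left (𝕜 := ℝ) (op k) x (op k x)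
    rw [← ContinuousLinearMap.star_eq_adjoint, hfix] at h
    rw [← h]
  rw [real_inner_self_eq_norm_sq, real_inner_self_eq_norm_sq] at h2
  nlinarith [norm_nonneg x, norm_nonneg (op k x)]

lemma sqrt_add_le' (s t : ℝ) (hs : 0 ≤ s) (ht : 0 ≤ t) :
    Real.sqrt (s + t) ≤ Real.sqrt s + Real.sqrt t := by
  have h1 := Real.sq_sqrt hs
  have h2 := Real.sq_sqrt ht
  have h : Real.sqrt (s + t) ≤ Real.sqrt ((Real.sqrt s + Real.sqrt t) ^ 2) :=
    Real.sqrt_le_sqrt (by nlinarith [Real.sqrt_nonneg s, Real.sqrt_nonneg t])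
  rwa [Real.sqrt_sq (by positivity)] at h

lemma op_diag_apply {d : ℕ} (a : Fin d → ℝ) (y : EuclideanSpace ℝ (Fin d)) (i : Fin d) :
    op (Matrix.diagonal a) y i = a i * y i := by
  rw [op_apply, Matrix.mulVec_diagonal]

lemma norm_op_diag_le {d : ℕ} (a : Fin d → ℝ) (i0 : Fin d)
    (hb : ∀ i, |a i| ≤ a i0) (y : EuclideanSpace ℝ (Fin d)) :
    ‖op (Matrix.diagonal a) y‖ ≤ a i0 * ‖y‖ := by
  have h0 : 0 ≤ a i0 := le_trans (abs_nonneg _) (hb i0)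
  rw [EuclideanSpace.norm_eq, EuclideanSpace.norm_eq]
  rw [show a i0 * Real.sqrt (∑ i, ‖y i‖ ^ 2) = Real.sqrt ((a i0)^2 * ∑ i, ‖y i‖ ^ 2) by
    rw [Real.sqrt_mul (by positivity), Real.sqrt_sq h0]]
  apply Real.sqrt_le_sqrt
  rw [Finset.mul_sum]
  apply Finset.sum_le_sum
  intro i _
  rw [op_diag_apply]
  have := hb i
  rw [Real.norm_eq_abs, Real.norm_eq_abs, abs_mul]
  rw [mul_pow]
  gcongr

lemma norm_op_diag_eq {d : ℕ} (a : Fin d → ℝ) (i0 : Fin d)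
    (hb : ∀ i, |a i| ≤ a i0) :
    ‖op (Matrix.diagonal a)‖ = a i0 := by
  have h0 : 0 ≤ a i0 := le_trans (abs_nonneg _) (hb i0)
  apply le_antisymm
  · exact ContinuousLinearMap.opNorm_le_bound _ h0 (norm_op_diag_le a i0 hb)
  · have he : op (Matrix.diagonal a) (EuclideanSpace.single i0 (1:ℝ)) =
        EuclideanSpace.single i0 (a i0) := by
      ext j
      rw [op_diag_apply]
      by_cases h : j = i0 <;> simp [EuclideanSpace.single_apply, h]
    have := ContinuousLinearMap.le_opNorm (op (Matrix.diagonal a))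
      (EuclideanSpace.single i0 (1:ℝ))
    rw [he, EuclideanSpace.norm_single, EuclideanSpace.norm_single] at this
    rw [Real.norm_eq_abs, Real.norm_eq_abs, abs_of_nonneg h0, abs_one, mul_one] at this
    exact this

lemma norm_op_conj {d : ℕ} {g k l D : Matrix (Fin d) (Fin d) ℝ}
    (hk : k ∈ Matrix.orthogonalGroup (Fin d) ℝ)
    (hl : l ∈ Matrix.orthogonalGroup (Fin d) ℝ)
    (hdecomp : g = k * D * l) : ‖op g‖ = ‖op D‖ := by
  have hD : star k * g * star l = D := by
    rw [hdecomp]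
    calc star k * (k * D * l) * star l
        = (star k * k) * D * (l * star l) := by simp only [mul_assoc]
      _ = D := by rw [hk.1, hl.2, one_mul, mul_one]
  apply le_antisymm
  · apply ContinuousLinearMap.opNorm_le_bound _ (norm_nonneg _)
    intro z
    rw [hdecomp, op_mul, op_mul, op_isometry hk]
    calc ‖op D (op l z)‖ ≤ ‖op D‖ * ‖op l z‖ := ContinuousLinearMap.le_opNorm _ _
      _ = ‖op D‖ * ‖z‖ := by rw [op_isometry hl]
  · apply ContinuousLinearMap.opNorm_le_bound _ (norm_nonneg _)
    intro z
    rw [← hD, op_mul, op_mul, op_isometry (Unitary.star_mem hk)]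
    calc ‖op g (op (star l) z)‖ ≤ ‖op g‖ * ‖op (star l) z‖ := ContinuousLinearMap.le_opNorm _ _
      _ = ‖op g‖ * ‖z‖ := by rw [op_isometry (Unitary.star_mem hl)]

/-- Let `g ∈ SL(V)`, `V = ℝ^d` Euclidean, with Cartan decomposition `g = k a l`
(`k, l` orthogonal, `a = diagonal κ` with `κ₁ ≥ κ₂ ≥ … ≥ 0` the singular values).
With `Y_g^m = ℝ (ᵗl e₁*)` (so that `δ(ℝx, Y_g^m) = |(l x)₁| / ‖x‖`, the functional
`ᵗl e₁*` having norm one), for every nonzero `x`: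
`δ(X, Y_g^m) ≤ ‖gx‖/(‖g‖‖x‖) ≤ δ(X, Y_g^m) + κ₂/κ₁`. -/
theorem stmt1 {d : ℕ} (hd : 2 ≤ d)
    (g k l : Matrix (Fin d) (Fin d) ℝ) (a : Fin d → ℝ)
    (hg : g.det = 1)
    (hk : k ∈ Matrix.orthogonalGroup (Fin d) ℝ)
    (hl : l ∈ Matrix.orthogonalGroup (Fin d) ℝ)
    (hdecomp : g = k * Matrix.diagonal a * l)
    (hmono : ∀ i j : Fin d, i ≤ j → a j ≤ a i)
    (hpos : ∀ i, 0 ≤ a i)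
    (x : EuclideanSpace ℝ (Fin d)) (hx : x ≠ 0) :
    |op l x ⟨0, by omega⟩| / ‖x‖ ≤ ‖op g x‖ / (‖op g‖ * ‖x‖) ∧
      ‖op g x‖ / (‖op g‖ * ‖x‖) ≤ |op l x ⟨0, by omega⟩| / ‖x‖ +
        a ⟨1, by omega⟩ / a ⟨0, by omega⟩ := by
  set i0 : Fin d := ⟨0, by omega⟩ with hi0
  set i1 : Fin d := ⟨1, by omega⟩ with hi1
  have hb : ∀ i, |a i| ≤ a i0 := by
    intro i
    rw [abs_of_nonneg (hpos i)]
    exact hmono i0 i (by simp [hi0, Fin.le_def])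
  -- positivity of a i0
  have hdet : (Matrix.diagonal a).det ≠ 0 := by
    intro h
    rw [hdecomp] at hg
    rw [Matrix.det_mul, Matrix.det_mul, h] at hg
    simp at hg
  have ha0 : 0 < a i0 := by
    rw [Matrix.det_diagonal] at hdet
    have := Finset.prod_ne_zero_iff.mp hdet i0 (Finset.mem_univ _)
    exact lt_of_le_of_ne (hpos i0) (Ne.symm this)
  have hxpos : 0 < ‖x‖ := norm_pos_iff.mpr hx
  have hgnorm : ‖op g‖ = a i0 :=
    (norm_op_conj hk hl hdecomp).trans (norm_op_diag_eq a i0 hb)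
  set y : EuclideanSpace ℝ (Fin d) := op l x with hy
  have hyn : ‖y‖ = ‖x‖ := op_isometry hl x
  have hgx : ‖op g x‖ = ‖op (Matrix.diagonal a) y‖ := by
    rw [hdecomp, op_mul, op_mul, op_isometry hk]
  -- lower bound on ‖op D y‖
  have hlow : a i0 * |y i0| ≤ ‖op (Matrix.diagonal a) y‖ := by
    rw [EuclideanSpace.norm_eq]
    have h1 : (a i0 * |y i0|) = Real.sqrt (‖op (Matrix.diagonal a) y i0‖ ^ 2) := by
      rw [Real.sqrt_sq_eq_abs, op_diag_apply, Real.norm_eq_abs, abs_abs, abs_mul,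
        abs_of_nonneg (hpos i0)]
    rw [h1]
    apply Real.sqrt_le_sqrt
    exact Finset.single_le_sum (f := fun i => ‖op (Matrix.diagonal a) y i‖ ^ 2)
      (fun i _ => by positivity) (Finset.mem_univ i0)
  -- upper bound on ‖op D y‖
  have hup : ‖op (Matrix.diagonal a) y‖ ≤ a i0 * |y i0| + a i1 * ‖x‖ := by
    rw [EuclideanSpace.norm_eq,
      Finset.sum_eq_add_sum_sdiff_singleton_of_mem (Finset.mem_univ i0)
        (fun i => ‖op (Matrix.diagonal a) y i‖ ^ 2)]
    refine le_trans (sqrt_add_le' _ _ (by positivity) (by positivity)) ?_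
    have e1 : Real.sqrt (‖op (Matrix.diagonal a) y i0‖ ^ 2) = a i0 * |y i0| := by
      rw [Real.sqrt_sq_eq_abs, op_diag_apply, Real.norm_eq_abs, abs_abs, abs_mul,
        abs_of_nonneg (hpos i0)]
    rw [e1]
    gcongr
    have e2 : ∑ i ∈ Finset.univ \ {i0}, ‖op (Matrix.diagonal a) y i‖ ^ 2 ≤
        (a i1) ^ 2 * ∑ i, ‖y i‖ ^ 2 := by
      rw [Finset.mul_sum]
      refine le_trans (Finset.sum_le_sum ?_)
        (Finset.sum_le_sum_of_subset_of_nonneg (Finset.subset_univ _)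
          (fun i _ _ => by positivity))
      intro i hi
      have hii : i1 ≤ i := by
        simp only [Finset.mem_sdiff, Finset.mem_singleton] at hi
        have : i.val ≠ 0 := fun h => hi.2 (Fin.ext h)
        simp [hi1, Fin.le_def]; omega
      have hai : |a i| ≤ a i1 := by
        rw [abs_of_nonneg (hpos i)]; exact hmono i1 i hii
      rw [op_diag_apply, Real.norm_eq_abs, Real.norm_eq_abs, abs_mul, mul_pow]
      gcongr
    refine le_trans (Real.sqrt_le_sqrt e2) ?_
    rw [Real.sqrt_mul (by positivity), Real.sqrt_sq (hpos i1), ← EuclideanSpace.norm_eq, hyn]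
  constructor
  · rw [hgnorm, div_le_div_iff₀ hxpos (by positivity), hgx]
    nlinarith [norm_nonneg (op (Matrix.diagonal a) y), abs_nonneg (y i0)]
  · rw [hgnorm, hgx, div_le_iff₀ (by positivity)]
    rw [show (|y i0| / ‖x‖ + a i1 / a i0) * (a i0 * ‖x‖) = a i0 * |y i0| + a i1 * ‖x‖ by
      field_simp]
    exact hup
end
end

section
/- Let ρ be a Borel probability measure on a group G acting on a compact metric space X, fibering G-equivariantly over a finite G-set A. If X is (ρ, γ, M, N)-contracted over A, then there exist constants C₁ > 0 and δ > 0 such that for all n ∈ ℕ and all x, y ∈ X with π_A(x) = π_A(y): ∫ d(gx, gy)^γ dρ^{*n}(g) ≤ C₁ e^{−δn} d(x,y)^γ. -/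
noncomputable section

open MeasureTheory

def convPow {G : Type*} [Monoid G] [MeasurableSpace G] (ρ : Measure G) : ℕ → Measure G
  | 0 => Measure.dirac 1
  | n + 1 => (convPow ρ n).mconv ρ

section helpers

variable {G : Type*} [Monoid G] [MeasurableSpace G] [MeasurableMul₂ G]

theorem my_mconv_assoc (μ ν ξ : Measure G) [SFinite μ] [SFinite ν] [SFinite ξ] :
    (μ.mconv ν).mconv ξ = μ.mconv (ν.mconv ξ) := by
  have hm : Measurable (fun p : G × G => p.1 * p.2) := measurable_mul
  show Measure.map _ ((Measure.map _ (μ.prod ν)).prod ξ)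
      = Measure.map _ (μ.prod (Measure.map _ (ν.prod ξ)))
  conv_lhs => rw [show ξ = Measure.map id ξ from (Measure.map_id).symm]
  conv_rhs => rw [show μ = Measure.map id μ from (Measure.map_id).symm]
  rw [Measure.map_prod_map _ _ hm measurable_id, Measure.map_prod_map _ _ measurable_id hm,
    Measure.map_map hm (hm.prodMap measurable_id), Measure.map_map hm (measurable_id.prodMap hm),
    ← Measure.prodAssoc_prod,
    Measure.map_map (hm.comp (measurable_id.prodMap hm)) MeasurableEquiv.prodAssoc.measurable]
  congr 1
  funext p
  rcases p with ⟨⟨a, b⟩, c⟩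
  simp [MeasurableEquiv.prodAssoc, mul_assoc]

instance convPow_sfinite (ρ : Measure G) [SFinite ρ] : ∀ n, SFinite (convPow ρ n)
  | 0 => by unfold convPow; infer_instance
  | n + 1 => by unfold convPow; haveI := convPow_sfinite ρ n; infer_instance

instance convPow_prob (ρ : Measure G) [IsProbabilityMeasure ρ] :
    ∀ n, IsProbabilityMeasure (convPow ρ n)
  | 0 => by unfold convPow; infer_instance
  | n + 1 => by unfold convPow; haveI := convPow_prob ρ n; infer_instance

theorem convPow_add (ρ : Measure G) [SFinite ρ] (m n : ℕ) :
    convPow ρ (m + n) = (convPow ρ m).mconv (convPow ρ n) := by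
  induction n with
  | zero =>
      show convPow ρ m = (convPow ρ m).mconv (Measure.dirac 1)
      rw [Measure.mconv_dirac_one]
  | succ n ih =>
      show (convPow ρ (m + n)).mconv ρ = _
      rw [ih]
      show _ = (convPow ρ m).mconv ((convPow ρ n).mconv ρ)
      rw [my_mconv_assoc]

theorem convPow_succ' (ρ : Measure G) [SFinite ρ] (n : ℕ) :
    convPow ρ (n + 1) = ρ.mconv (convPow ρ n) := by
  have := convPow_add ρ 1 n
  rw [show (1 : ℕ) + n = n + 1 from by omega] at this
  rw [this]
  congr 1
  show (Measure.dirac 1).mconv ρ = ρ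
  rw [Measure.dirac_one_mconv]

end helpers

/-- Let `ρ` be a Borel probability measure on a group `G` acting on a compact metric
space `X` which fibers `G`-equivariantly over a finite `G`-set `A`. If `X` is
`(ρ, γ, M, N)`-contracted over `A` — i.e. `d(gx,gy) ≤ M N(g)^M d(x,y)` with
`N : G → [1,∞)` submultiplicative, `∫ N(g)^{Mγ} dρ(g) < ∞`, and for some `n₀` the
quantity `∫ (d(gx,gy)/d(x,y))^γ dρ^{*n₀}(g)` is `≤ c < 1` uniformly over fibers — then
there are `C₁, δ > 0` with `∫ d(gx,gy)^γ dρ^{*n}(g) ≤ C₁ e^{-δn} d(x,y)^γ` for all `n`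
and all `x, y` in the same fiber. -/
theorem stmt13 {G : Type*} [Group G] [TopologicalSpace G] [IsTopologicalGroup G]
    [SecondCountableTopology G] [LocallyCompactSpace G]
    [MeasurableSpace G] [BorelSpace G]
    (ρ : Measure G) [IsProbabilityMeasure ρ]
    {X : Type*} [MetricSpace X] [CompactSpace X] [MulAction G X]
    (hact : Continuous fun p : G × X => p.1 • p.2)
    {A : Type*} [Fintype A] [MulAction G A] (πA : X → A)
    (hπ : ∀ (g : G) (x : X), πA (g • x) = g • πA x)
    (γ M : ℝ) (hγ : 0 < γ) (hM : 0 < M)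
    (N : G → ℝ) (hN1 : ∀ g, 1 ≤ N g) (hNsub : ∀ g h : G, N (g * h) ≤ N g * N h)
    (hLip : ∀ (g : G) (x y : X), dist (g • x) (g • y) ≤ M * N g ^ M * dist x y)
    (hmom : Integrable (fun g => N g ^ (M * γ)) ρ)
    (hcontr : ∃ (n₀ : ℕ) (c : ℝ), 0 < n₀ ∧ c < 1 ∧
      ∀ x y : X, x ≠ y → πA x = πA y →
        ∫ g, (dist (g • x) (g • y) / dist x y) ^ γ ∂(convPow ρ n₀) ≤ c) :
    ∃ C₁ δ : ℝ, 0 < C₁ ∧ 0 < δ ∧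
      ∀ (n : ℕ) (x y : X), πA x = πA y →
        ∫ g, dist (g • x) (g • y) ^ γ ∂(convPow ρ n)
          ≤ C₁ * Real.exp (-δ * n) * dist x y ^ γ := by
  obtain ⟨n₀, c, hn₀, hc1, hc⟩ := hcontr
  set c' : ℝ := max c (1 / 2) with hc'def
  have hc'0 : (0 : ℝ) < c' := lt_max_of_lt_right (by norm_num)
  have hc'1 : c' < 1 := max_lt hc1 (by norm_num)
  -- continuity of the integrand
  have hsmulc : ∀ x : X, Continuous fun g : G => g • x := fun x =>
    hact.comp (continuous_id.prodMk continuous_const)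
  have hfc : ∀ x y : X, Continuous fun g : G => dist (g • x) (g • y) ^ γ := fun x y =>
    ((hsmulc x).dist (hsmulc y)).rpow_const (fun g => Or.inr hγ.le)
  -- uniform bound from compactness
  set B : ℝ := Metric.diam (Set.univ : Set X) with hBdef
  have hBd : ∀ u v : X, dist u v ≤ B := fun u v =>
    Metric.dist_le_diam_of_mem isCompact_univ.isBounded trivial trivial
  have hfbound : ∀ (x y : X) (g : G), dist (g • x) (g • y) ^ γ ≤ B ^ γ := fun x y g =>
    Real.rpow_le_rpow dist_nonneg (hBd _ _) hγ.le
  have hfnonneg : ∀ (x y : X) (g : G), 0 ≤ dist (g • x) (g • y) ^ γ := fun x y g =>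
    Real.rpow_nonneg dist_nonneg _
  -- integrability w.r.t. any finite measure
  have hint : ∀ (μ : Measure G), IsFiniteMeasure μ → ∀ x y : X,
      Integrable (fun g => dist (g • x) (g • y) ^ γ) μ := by
    intro μ hμ x y
    exact (integrable_const (B ^ γ)).mono' (hfc x y).aestronglyMeasurable
      (Filter.Eventually.of_forall fun g => by
        rw [Real.norm_eq_abs, abs_of_nonneg (hfnonneg x y g)]; exact hfbound x y g)
  -- convolution integral formula
  have key : ∀ (μ ν : Measure G), IsProbabilityMeasure μ → IsProbabilityMeasure ν →
      ∀ x y : X,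
      ∫ g, dist (g • x) (g • y) ^ γ ∂(μ.mconv ν)
        = ∫ g, ∫ h, dist ((g * h) • x) ((g * h) • y) ^ γ ∂ν ∂μ := by
    intro μ ν hμ hν x y
    have hcont2 : Continuous fun p : G × G => dist ((p.1 * p.2) • x) ((p.1 * p.2) • y) ^ γ :=
      (hfc x y).comp continuous_mul
    have hi : Integrable (fun p : G × G => dist ((p.1 * p.2) • x) ((p.1 * p.2) • y) ^ γ)
        (μ.prod ν) :=
      (integrable_const (B ^ γ)).mono' hcont2.aestronglyMeasurable
        (Filter.Eventually.of_forall fun p => by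
          rw [Real.norm_eq_abs, abs_of_nonneg (hfnonneg x y _)]; exact hfbound x y _)
    rw [Measure.mconv, integral_map measurable_mul.aemeasurable
      (hfc x y).aestronglyMeasurable]
    exact MeasureTheory.integral_prod _ hi
  -- D notation
  set D : ℕ → X → X → ℝ := fun n x y => ∫ g, dist (g • x) (g • y) ^ γ ∂(convPow ρ n)
    with hDdef
  have hDnonneg : ∀ n x y, 0 ≤ D n x y := fun n x y =>
    integral_nonneg (fun g => hfnonneg x y g)
  -- single-step contraction from hc
  have hstep : ∀ u v : X, πA u = πA v →
      ∫ g, dist (g • u) (g • v) ^ γ ∂(convPow ρ n₀) ≤ c' * dist u v ^ γ := by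
    intro u v huv
    rcases eq_or_ne u v with h | h
    · subst h
      have h0 : ∀ g : G, dist (g • u) (g • u) ^ γ = 0 := fun g => by
        simp [Real.zero_rpow hγ.ne']
      simp only [h0, integral_zero, dist_self, Real.zero_rpow hγ.ne', mul_zero]
      exact le_refl 0
    · have hd : 0 < dist u v := dist_pos.mpr h
      have hcuv := hc u v h huv
      have hrw : ∀ g : G, (dist (g • u) (g • v) / dist u v) ^ γ
          = dist (g • u) (g • v) ^ γ / dist u v ^ γ := fun g =>
        Real.div_rpow dist_nonneg hd.le γ
      rw [show (fun g => (dist (g • u) (g • v) / dist u v) ^ γ)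
          = fun g => dist (g • u) (g • v) ^ γ / dist u v ^ γ from funext hrw] at hcuv
      rw [integral_div] at hcuv
      have hdγ : 0 < dist u v ^ γ := Real.rpow_pos_of_pos hd γ
      have h1 : ∫ g, dist (g • u) (g • v) ^ γ ∂(convPow ρ n₀) ≤ c * dist u v ^ γ := by
        rw [div_le_iff₀ hdγ] at hcuv; linarith
      have h2 : c * dist u v ^ γ ≤ c' * dist u v ^ γ :=
        mul_le_mul_of_nonneg_right (le_max_left _ _) hdγ.le
      linarith
  -- contraction recursion
  have contract : ∀ (m : ℕ) (x y : X), πA x = πA y →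
      D (n₀ + m) x y ≤ c' * D m x y := by
    intro m x y hxy
    have e1 : D (n₀ + m) x y
        = ∫ g, ∫ h, dist ((g * h) • x) ((g * h) • y) ^ γ ∂(convPow ρ m) ∂(convPow ρ n₀) := by
      simp only [hDdef]
      rw [convPow_add ρ n₀ m]
      exact key _ _ inferInstance inferInstance x y
    have hprodint : Integrable
        (fun p : G × G => dist ((p.1 * p.2) • x) ((p.1 * p.2) • y) ^ γ)
        ((convPow ρ n₀).prod (convPow ρ m)) :=
      (integrable_const (B ^ γ)).mono'
        (((hfc x y).comp continuous_mul).aestronglyMeasurable)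
        (Filter.Eventually.of_forall fun p => by
          rw [Real.norm_eq_abs, abs_of_nonneg (hfnonneg x y _)]; exact hfbound x y _)
    have e2 : ∫ g, ∫ h, dist ((g * h) • x) ((g * h) • y) ^ γ ∂(convPow ρ m) ∂(convPow ρ n₀)
        = ∫ h, ∫ g, dist ((g * h) • x) ((g * h) • y) ^ γ ∂(convPow ρ n₀) ∂(convPow ρ m) :=
      integral_integral_swap hprodint
    rw [e1, e2]
    have hpt : ∀ h : G,
        ∫ g, dist ((g * h) • x) ((g * h) • y) ^ γ ∂(convPow ρ n₀)
          ≤ c' * dist (h • x) (h • y) ^ γ := by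
      intro h
      have ha : ∀ g : G, (g * h) • x = g • (h • x) := fun g => mul_smul g h x
      have hb : ∀ g : G, (g * h) • y = g • (h • y) := fun g => mul_smul g h y
      simp only [ha, hb]
      exact hstep (h • x) (h • y) (by rw [hπ, hπ, hxy])
    calc ∫ h, ∫ g, dist ((g * h) • x) ((g * h) • y) ^ γ ∂(convPow ρ n₀) ∂(convPow ρ m)
        ≤ ∫ h, c' * dist (h • x) (h • y) ^ γ ∂(convPow ρ m) := by
          apply integral_mono_of_nonneg
          · exact Filter.Eventually.of_forall fun h =>
              integral_nonneg fun g => hfnonneg x y _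
          · exact ((hint _ inferInstance x y).const_mul c')
          · exact Filter.Eventually.of_forall hpt
      _ = c' * D m x y := by rw [integral_const_mul]
  -- moment recursion
  set I : ℝ := ∫ g, N g ^ (M * γ) ∂ρ with hIdef
  have hI1 : (1 : ℝ) ≤ I := by
    rw [hIdef]
    have h1 : (1 : ℝ) = ∫ _ : G, (1 : ℝ) ∂ρ := by simp
    rw [h1]
    exact integral_mono (integrable_const 1) hmom
      (fun g => Real.one_le_rpow (hN1 g) (mul_pos hM hγ).le)
  set K : ℝ := max (M ^ γ * I) 1 with hKdef
  have hK1 : (1 : ℝ) ≤ K := le_max_right _ _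
  have hK0 : (0 : ℝ) < K := lt_of_lt_of_le one_pos hK1
  have moment : ∀ (m : ℕ) (x y : X), D (m + 1) x y ≤ M ^ γ * I * D m x y := by
    intro m x y
    have e1 : D (m + 1) x y
        = ∫ g, ∫ h, dist ((g * h) • x) ((g * h) • y) ^ γ ∂(convPow ρ m) ∂ρ := by
      simp only [hDdef]
      rw [convPow_succ' ρ m]
      exact key _ _ inferInstance inferInstance x y
    rw [e1]
    have hpt : ∀ g : G,
        ∫ h, dist ((g * h) • x) ((g * h) • y) ^ γ ∂(convPow ρ m)
          ≤ M ^ γ * N g ^ (M * γ) * D m x y := by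
      intro g
      have hNg0 : (0 : ℝ) ≤ N g := le_trans zero_le_one (hN1 g)
      have hb : ∀ h : G, dist ((g * h) • x) ((g * h) • y) ^ γ
          ≤ M ^ γ * N g ^ (M * γ) * dist (h • x) (h • y) ^ γ := by
        intro h
        have h1 : dist ((g * h) • x) ((g * h) • y)
            ≤ M * N g ^ M * dist (h • x) (h • y) := by
          rw [mul_smul, mul_smul]; exact hLip g (h • x) (h • y)
        have h2 : dist ((g * h) • x) ((g * h) • y) ^ γ
            ≤ (M * N g ^ M * dist (h • x) (h • y)) ^ γ :=
          Real.rpow_le_rpow dist_nonneg h1 hγ.le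
        have hNgM : (0 : ℝ) ≤ N g ^ M := Real.rpow_nonneg hNg0 M
        have h3 : (M * N g ^ M * dist (h • x) (h • y)) ^ γ
            = M ^ γ * (N g ^ M) ^ γ * dist (h • x) (h • y) ^ γ := by
          rw [Real.mul_rpow (mul_nonneg hM.le hNgM) dist_nonneg,
            Real.mul_rpow hM.le hNgM]
        have h4 : (N g ^ M) ^ γ = N g ^ (M * γ) := (Real.rpow_mul hNg0 M γ).symm
        calc dist ((g * h) • x) ((g * h) • y) ^ γ
            ≤ (M * N g ^ M * dist (h • x) (h • y)) ^ γ := h2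
          _ = M ^ γ * (N g ^ M) ^ γ * dist (h • x) (h • y) ^ γ := h3
          _ = M ^ γ * N g ^ (M * γ) * dist (h • x) (h • y) ^ γ := by rw [h4]
      calc ∫ h, dist ((g * h) • x) ((g * h) • y) ^ γ ∂(convPow ρ m)
          ≤ ∫ h, M ^ γ * N g ^ (M * γ) * dist (h • x) (h • y) ^ γ ∂(convPow ρ m) := by
            apply integral_mono_of_nonneg
            · exact Filter.Eventually.of_forall fun h => hfnonneg x y _
            · exact ((hint _ inferInstance (x) (y)).comp_measurable measurable_id).const_mul _
                |>.congr (Filter.Eventually.of_forall fun h => rfl)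
            · exact Filter.Eventually.of_forall hb
        _ = M ^ γ * N g ^ (M * γ) * D m x y := by rw [integral_const_mul]
    calc ∫ g, ∫ h, dist ((g * h) • x) ((g * h) • y) ^ γ ∂(convPow ρ m) ∂ρ
        ≤ ∫ g, M ^ γ * N g ^ (M * γ) * D m x y ∂ρ := by
          apply integral_mono_of_nonneg
          · exact Filter.Eventually.of_forall fun g =>
              integral_nonneg fun h => hfnonneg x y _
          · exact (hmom.const_mul (M ^ γ)).mul_const (D m x y)
          · exact Filter.Eventually.of_forall hpt
      _ = M ^ γ * I * D m x y := by
          rw [integral_mul_const, integral_const_mul]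
  -- base case
  have D0 : ∀ x y : X, D 0 x y = dist x y ^ γ := by
    intro x y
    simp only [hDdef]
    show ∫ g, dist (g • x) (g • y) ^ γ ∂(Measure.dirac 1) = _
    rw [integral_dirac' _ 1 (hfc x y).stronglyMeasurable]
    simp [one_smul]
  -- growth bound
  have Dle : ∀ (m : ℕ) (x y : X), D m x y ≤ K ^ m * dist x y ^ γ := by
    intro m
    induction m with
    | zero => intro x y; rw [D0]; simp
    | succ m ih =>
        intro x y
        calc D (m + 1) x y ≤ M ^ γ * I * D m x y := moment m x y
          _ ≤ K * D m x y := mul_le_mul_of_nonneg_right (le_max_left _ _) (hDnonneg m x y)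
          _ ≤ K * (K ^ m * dist x y ^ γ) :=
              mul_le_mul_of_nonneg_left (ih x y) hK0.le
          _ = K ^ (m + 1) * dist x y ^ γ := by ring
  -- main estimate
  have main : ∀ (k r : ℕ), r < n₀ → ∀ x y : X, πA x = πA y →
      D (n₀ * k + r) x y ≤ c' ^ k * (K ^ n₀ * dist x y ^ γ) := by
    intro k
    induction k with
    | zero =>
        intro r hr x y hxy
        simp only [Nat.mul_zero, Nat.zero_add, pow_zero, one_mul]
        calc D r x y ≤ K ^ r * dist x y ^ γ := Dle r x y
          _ ≤ K ^ n₀ * dist x y ^ γ :=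
              mul_le_mul_of_nonneg_right (pow_le_pow_right₀ hK1 hr.le)
                (Real.rpow_nonneg dist_nonneg _)
    | succ k ih =>
        intro r hr x y hxy
        have hidx : n₀ * (k + 1) + r = n₀ + (n₀ * k + r) := by ring
        rw [hidx]
        calc D (n₀ + (n₀ * k + r)) x y ≤ c' * D (n₀ * k + r) x y :=
              contract (n₀ * k + r) x y hxy
          _ ≤ c' * (c' ^ k * (K ^ n₀ * dist x y ^ γ)) :=
              mul_le_mul_of_nonneg_left (ih r hr x y hxy) hc'0.le
          _ = c' ^ (k + 1) * (K ^ n₀ * dist x y ^ γ) := by ring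
  -- choose constants
  have hlog : Real.log c' < 0 := Real.log_neg hc'0 hc'1
  have hn₀R : (0 : ℝ) < (n₀ : ℝ) := Nat.cast_pos.mpr hn₀
  refine ⟨K ^ n₀ / c', -Real.log c' / n₀, div_pos (pow_pos hK0 _) hc'0,
    div_pos (neg_pos.mpr hlog) hn₀R, ?_⟩
  intro n x y hxy
  set k : ℕ := n / n₀ with hkdef
  set r : ℕ := n % n₀ with hrdef
  have hn : n₀ * k + r = n := Nat.div_add_mod n n₀
  have hr : r < n₀ := Nat.mod_lt n hn₀
  have hmain : D n x y ≤ c' ^ k * (K ^ n₀ * dist x y ^ γ) := by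
    rw [← hn]; exact main k r hr x y hxy
  have hkn : (n : ℝ) ≤ (n₀ : ℝ) * (k + 1) := by
    have h1 : n ≤ n₀ * (k + 1) := by
      rw [Nat.mul_succ, ← hn]
      exact Nat.add_le_add_left hr.le _
    exact_mod_cast h1
  -- exponential bound on c'^k
  have hexp : c' ^ k ≤ Real.exp (-(-Real.log c' / n₀) * n) / c' := by
    have hck : c' ^ k = Real.exp ((k : ℝ) * Real.log c') := by
      rw [← Real.exp_log hc'0, ← Real.exp_nat_mul, Real.log_exp]
    have harg : (k : ℝ) * Real.log c' ≤ -(-Real.log c' / n₀) * n - Real.log c' := by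
      have heq : -(-Real.log c' / n₀) * n - Real.log c'
          = Real.log c' * ((n : ℝ) - n₀ * (k + 1)) / n₀ + (k : ℝ) * Real.log c' := by
        field_simp
        ring
      rw [heq]
      have h0 : 0 ≤ Real.log c' * ((n : ℝ) - n₀ * (k + 1)) / n₀ :=
        div_nonneg (by nlinarith) hn₀R.le
      linarith
    calc c' ^ k = Real.exp ((k : ℝ) * Real.log c') := hck
      _ ≤ Real.exp (-(-Real.log c' / n₀) * n - Real.log c') := Real.exp_le_exp.mpr harg
      _ = Real.exp (-(-Real.log c' / n₀) * n) / c' := by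
          rw [Real.exp_sub, Real.exp_log hc'0]
  have hdγ0 : 0 ≤ dist x y ^ γ := Real.rpow_nonneg dist_nonneg _
  calc D n x y ≤ c' ^ k * (K ^ n₀ * dist x y ^ γ) := hmain
    _ = (c' ^ k * K ^ n₀) * dist x y ^ γ := by ring
    _ ≤ (Real.exp (-(-Real.log c' / n₀) * n) / c' * K ^ n₀) * dist x y ^ γ := by
        apply mul_le_mul_of_nonneg_right _ hdγ0
        exact mul_le_mul_of_nonneg_right hexp (pow_pos hK0 _).le
    _ = K ^ n₀ / c' * Real.exp (-(-Real.log c' / n₀) * n) * dist x y ^ γ := by ring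
end
end

section
/- Let ψ(t) = (1/√(2π)) ∫_t^∞ e^{−u²/2} du. For any γ ∈ (0,1] there is a constant C (depending only on γ) such that for every f in C^{0,γ}_ω(X × ℝ) with fiberwise limits p^−(f), p^+(f) at ∓∞, the function φ(x,t) = f(x,t) − p^−(f)(x)ψ(t) − p^+(f)(x)(1−ψ(t)) satisfies sup_{x,t} e^{γ|t|}|φ(x,t)| ≤ C‖f‖_{γ,ω} and, for x, x' in the same fiber, e^{γ|t|}|φ(x,t) − φ(x',t)| ≤ C‖f‖_{γ,ω} d(x,x')^γ. -/
noncomputable section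

open Filter MeasureTheory

/-- `ψ(t) = (1/√(2π)) ∫_t^∞ e^{-u²/2} du`. -/
def psi (t : ℝ) : ℝ :=
  (Real.sqrt (2 * Real.pi))⁻¹ * ∫ u in Set.Ioi t, Real.exp (-u ^ 2 / 2)

/-- The conical modulus
`ω((x,t),(x',t')) = e^{-(|t|+|t'|)/2} √(d(x,x')² + (e^{(t-t')/2} - e^{(t'-t)/2})²)`. -/
def omegaMod {X : Type*} [MetricSpace X] (x : X) (t : ℝ) (x' : X) (t' : ℝ) : ℝ :=
  Real.exp (-((|t| + |t'|) / 2)) *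
    Real.sqrt (dist x x' ^ 2 + (Real.exp ((t - t') / 2) - Real.exp ((t' - t) / 2)) ^ 2)

lemma gauss_integrable : Integrable (fun u : ℝ => Real.exp (-u ^ 2 / 2)) := by
  have h := integrable_exp_neg_mul_sq (show (0:ℝ) < 1/2 by norm_num)
  convert h using 2 with u
  ring_nf

lemma gauss_total : (∫ u : ℝ, Real.exp (-u ^ 2 / 2)) = Real.sqrt (2 * Real.pi) := by
  have h := integral_gaussian (1/2 : ℝ)
  have h2 : (∫ u : ℝ, Real.exp (-u ^ 2 / 2)) = ∫ u : ℝ, Real.exp (-(1/2) * u ^ 2) := by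
    congr 1; funext u; ring_nf
  rw [h2, h]
  congr 1; ring

lemma sqrt_two_pi_ge_one : (1 : ℝ) ≤ Real.sqrt (2 * Real.pi) := by
  rw [show (1:ℝ) = Real.sqrt 1 by simp]
  exact Real.sqrt_le_sqrt (by nlinarith [Real.pi_gt_three])

lemma psi_nonneg (t : ℝ) : 0 ≤ psi t := by
  apply mul_nonneg (by positivity)
  exact setIntegral_nonneg measurableSet_Ioi (fun u _ => (Real.exp_pos _).le)

lemma psi_le_one (t : ℝ) : psi t ≤ 1 := by
  unfold psi
  have h1 : (∫ u in Set.Ioi t, Real.exp (-u ^ 2 / 2)) ≤ Real.sqrt (2 * Real.pi) := by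
    rw [← gauss_total]
    exact setIntegral_le_integral gauss_integrable
      (Filter.Eventually.of_forall fun u => (Real.exp_pos _).le)
  have h2 : (0:ℝ) < Real.sqrt (2 * Real.pi) := lt_of_lt_of_le one_pos sqrt_two_pi_ge_one
  rw [inv_mul_le_iff₀ h2]
  linarith

lemma psi_le (t : ℝ) : psi t ≤ Real.exp (1/2) * Real.exp (-t) := by
  have h1 : (∫ u in Set.Ioi t, Real.exp (-u ^ 2 / 2))
      ≤ ∫ u in Set.Ioi t, Real.exp (1/2) * Real.exp (-u) := by
    apply setIntegral_mono_on gauss_integrable.integrableOn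
    · exact (Integrable.const_mul (by have := exp_neg_integrableOn_Ioi t one_pos; simp at this; exact this) _)
    · exact measurableSet_Ioi
    · intro u _
      rw [← Real.exp_add]
      exact Real.exp_le_exp.2 (by nlinarith [sq_nonneg (u - 1)])
  have h2 : (∫ u in Set.Ioi t, Real.exp (1/2) * Real.exp (-u))
      = Real.exp (1/2) * Real.exp (-t) := by
    rw [integral_const_mul]
    congr 1
    exact integral_exp_neg_Ioi t
  have h3 : (Real.sqrt (2 * Real.pi))⁻¹ ≤ 1 :=
    inv_le_one_of_one_le₀ sqrt_two_pi_ge_one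
  have h4 : 0 ≤ (∫ u in Set.Ioi t, Real.exp (-u ^ 2 / 2)) :=
    setIntegral_nonneg measurableSet_Ioi (fun u _ => (Real.exp_pos _).le)
  calc psi t ≤ 1 * ∫ u in Set.Ioi t, Real.exp (-u ^ 2 / 2) :=
        mul_le_mul_of_nonneg_right h3 h4
    _ = ∫ u in Set.Ioi t, Real.exp (-u ^ 2 / 2) := one_mul _
    _ ≤ Real.exp (1/2) * Real.exp (-t) := h2 ▸ h1

lemma one_sub_psi_le (t : ℝ) : 1 - psi t ≤ Real.exp (1/2) * Real.exp t := by
  have hsplit : (∫ u in Set.Iic t, Real.exp (-u ^ 2 / 2))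
      + (∫ u in Set.Ioi t, Real.exp (-u ^ 2 / 2)) = Real.sqrt (2 * Real.pi) := by
    rw [← gauss_total]
    exact intervalIntegral.integral_Iic_add_Ioi gauss_integrable.integrableOn gauss_integrable.integrableOn
  have h2 : (0:ℝ) < Real.sqrt (2 * Real.pi) := lt_of_lt_of_le one_pos sqrt_two_pi_ge_one
  have hpsi : 1 - psi t = (Real.sqrt (2 * Real.pi))⁻¹ * ∫ u in Set.Iic t, Real.exp (-u ^ 2 / 2) := by
    have hone : (Real.sqrt (2 * Real.pi))⁻¹ * ((∫ u in Set.Iic t, Real.exp (-u ^ 2 / 2))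
        + ∫ u in Set.Ioi t, Real.exp (-u ^ 2 / 2)) = 1 := by
      rw [hsplit]; exact inv_mul_cancel₀ h2.ne'
    unfold psi
    linear_combination -hone
  have h1 : (∫ u in Set.Iic t, Real.exp (-u ^ 2 / 2))
      ≤ ∫ u in Set.Iic t, Real.exp (1/2) * Real.exp u := by
    apply setIntegral_mono_on gauss_integrable.integrableOn
    · exact (Integrable.const_mul (integrableOn_exp_Iic t) _)
    · exact measurableSet_Iic
    · intro u _
      rw [← Real.exp_add]
      exact Real.exp_le_exp.2 (by nlinarith [sq_nonneg (u + 1)])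
  have h2' : (∫ u in Set.Iic t, Real.exp (1/2) * Real.exp u) = Real.exp (1/2) * Real.exp t := by
    rw [integral_const_mul]
    congr 1
    exact integral_exp_Iic t
  have h3 : (Real.sqrt (2 * Real.pi))⁻¹ ≤ 1 := inv_le_one_of_one_le₀ sqrt_two_pi_ge_one
  have h4 : 0 ≤ (∫ u in Set.Iic t, Real.exp (-u ^ 2 / 2)) :=
    setIntegral_nonneg measurableSet_Iic (fun u _ => (Real.exp_pos _).le)
  calc 1 - psi t = (Real.sqrt (2 * Real.pi))⁻¹ * ∫ u in Set.Iic t, Real.exp (-u ^ 2 / 2) := hpsi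
    _ ≤ 1 * ∫ u in Set.Iic t, Real.exp (-u ^ 2 / 2) := mul_le_mul_of_nonneg_right h3 h4
    _ = ∫ u in Set.Iic t, Real.exp (-u ^ 2 / 2) := one_mul _
    _ ≤ Real.exp (1/2) * Real.exp t := h2' ▸ h1

lemma exp_half_le_two : Real.exp (1/2) ≤ 2 := by
  have h1 : Real.exp (1/2) * Real.exp (1/2) = Real.exp 1 := by
    rw [← Real.exp_add]; norm_num
  nlinarith [Real.exp_one_lt_d9, Real.exp_pos (1/2:ℝ)]


/-- For `γ ∈ (0,1]` there is a constant `C` (depending only on `γ`) such that for every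
`f ∈ C^{0,γ}_ω(X × ℝ)` with fiberwise limits `p⁻(f)` at `-∞` and `p⁺(f)` at `+∞`, the
function `φ(x,t) = f(x,t) - p⁻(f)(x)ψ(t) - p⁺(f)(x)(1 - ψ(t))` satisfies
`sup e^{γ|t|}|φ(x,t)| ≤ C ‖f‖_{γ,ω}` and, for `x, x'` in the same fiber,
`e^{γ|t|}|φ(x,t) - φ(x',t)| ≤ C ‖f‖_{γ,ω} d(x,x')^γ`. -/
theorem stmt18 {X : Type*} [MetricSpace X] {A : Type*} [Fintype A] (πA : X → A)
    (γ : ℝ) (hγ : γ ∈ Set.Ioc (0 : ℝ) 1) :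
    ∃ C : ℝ, 0 < C ∧
      ∀ (f : X → ℝ → ℂ) (B : ℝ) (pm pp : A → ℂ),
        0 ≤ B →
        (∀ (x x' : X) (t t' : ℝ), πA x = πA x' →
          ‖f x t - f x' t'‖ ≤ B * omegaMod x t x' t' ^ γ) →
        (∀ x : X, Tendsto (fun t => f x t) atBot (nhds (pm (πA x)))) →
        (∀ x : X, Tendsto (fun t => f x t) atTop (nhds (pp (πA x)))) →
        (∀ (x : X) (t : ℝ),
          Real.exp (γ * |t|) *
              ‖f x t - pm (πA x) * (psi t : ℂ) - pp (πA x) * (1 - (psi t : ℂ))‖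
            ≤ C * B) ∧
        ∀ (x x' : X) (t : ℝ), πA x = πA x' →
          Real.exp (γ * |t|) *
              ‖(f x t - pm (πA x) * (psi t : ℂ) - pp (πA x) * (1 - (psi t : ℂ)))
                - (f x' t - pm (πA x') * (psi t : ℂ) - pp (πA x') * (1 - (psi t : ℂ)))‖
            ≤ C * B * dist x x' ^ γ := by
  obtain ⟨hγ0, hγ1⟩ := hγ
  refine ⟨5, by norm_num, ?_⟩
  intro f B pm pp hB hHol hbot htop
  have hω : ∀ (x x' : X) (t t' : ℝ), 0 ≤ omegaMod x t x' t' :=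
    fun x x' t t' => mul_nonneg (Real.exp_pos _).le (Real.sqrt_nonneg _)
  -- key bound near -∞
  have key_bot : ∀ (x : X) (t : ℝ), t ≤ 0 →
      ‖f x t - pm (πA x)‖ ≤ B * Real.exp (γ * t) := by
    intro x t ht
    have h1 : Tendsto (fun t' => ‖f x t - f x t'‖) atBot (nhds ‖f x t - pm (πA x)‖) :=
      (tendsto_const_nhds.sub (hbot x)).norm
    refine le_of_tendsto h1 ?_
    filter_upwards [eventually_le_atBot t] with t' ht'
    have habs1 : |t| = -t := abs_of_nonpos ht
    have habs2 : |t'| = -t' := abs_of_nonpos (ht'.trans ht)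
    have hom : omegaMod x t x t' ≤ Real.exp t := by
      have hle : Real.exp ((t' - t)/2) ≤ Real.exp ((t - t')/2) :=
        Real.exp_le_exp.2 (by linarith)
      calc omegaMod x t x t'
          = Real.exp (-((|t| + |t'|)/2)) * |Real.exp ((t - t')/2) - Real.exp ((t' - t)/2)| := by
            unfold omegaMod
            rw [dist_self]
            norm_num [Real.sqrt_sq_eq_abs]
        _ ≤ Real.exp (-((|t| + |t'|)/2)) * Real.exp ((t - t')/2) := by
            refine mul_le_mul_of_nonneg_left ?_ (Real.exp_pos _).le
            rw [abs_of_nonneg (sub_nonneg.2 hle)]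
            exact (sub_le_self _ (Real.exp_pos _).le)
        _ = Real.exp (-((|t| + |t'|)/2) + (t - t')/2) := (Real.exp_add _ _).symm
        _ ≤ Real.exp t := Real.exp_le_exp.2 (by rw [habs1, habs2]; linarith)
    calc ‖f x t - f x t'‖ ≤ B * omegaMod x t x t' ^ γ := hHol x x t t' rfl
      _ ≤ B * Real.exp (γ * t) := by
          refine mul_le_mul_of_nonneg_left ?_ hB
          calc omegaMod x t x t' ^ γ ≤ Real.exp t ^ γ :=
              Real.rpow_le_rpow (hω x x t t') hom hγ0.le
            _ = Real.exp (γ * t) := by rw [← Real.exp_mul, mul_comm]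
  -- key bound near +∞
  have key_top : ∀ (x : X) (t : ℝ), 0 ≤ t →
      ‖f x t - pp (πA x)‖ ≤ B * Real.exp (-(γ * t)) := by
    intro x t ht
    have h1 : Tendsto (fun t' => ‖f x t - f x t'‖) atTop (nhds ‖f x t - pp (πA x)‖) :=
      (tendsto_const_nhds.sub (htop x)).norm
    refine le_of_tendsto h1 ?_
    filter_upwards [eventually_ge_atTop t] with t' ht'
    have habs1 : |t| = t := abs_of_nonneg ht
    have habs2 : |t'| = t' := abs_of_nonneg (ht.trans ht')
    have hom : omegaMod x t x t' ≤ Real.exp (-t) := by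
      have hle : Real.exp ((t - t')/2) ≤ Real.exp ((t' - t)/2) :=
        Real.exp_le_exp.2 (by linarith)
      calc omegaMod x t x t'
          = Real.exp (-((|t| + |t'|)/2)) * |Real.exp ((t - t')/2) - Real.exp ((t' - t)/2)| := by
            unfold omegaMod
            rw [dist_self]
            norm_num [Real.sqrt_sq_eq_abs]
        _ ≤ Real.exp (-((|t| + |t'|)/2)) * Real.exp ((t' - t)/2) := by
            refine mul_le_mul_of_nonneg_left ?_ (Real.exp_pos _).le
            rw [abs_sub_comm, abs_of_nonneg (sub_nonneg.2 hle)]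
            exact (sub_le_self _ (Real.exp_pos _).le)
        _ = Real.exp (-((|t| + |t'|)/2) + (t' - t)/2) := (Real.exp_add _ _).symm
        _ ≤ Real.exp (-t) := Real.exp_le_exp.2 (by rw [habs1, habs2]; linarith)
    calc ‖f x t - f x t'‖ ≤ B * omegaMod x t x t' ^ γ := hHol x x t t' rfl
      _ ≤ B * Real.exp (-(γ * t)) := by
          refine mul_le_mul_of_nonneg_left ?_ hB
          calc omegaMod x t x t' ^ γ ≤ Real.exp (-t) ^ γ :=
              Real.rpow_le_rpow (hω x x t t') hom hγ0.le
            _ = Real.exp (-(γ * t)) := by rw [← Real.exp_mul]; ring_nf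
  -- difference of limits
  have hdiff : ∀ x : X, ‖pp (πA x) - pm (πA x)‖ ≤ 2 * B := by
    intro x
    have h1 := key_bot x 0 le_rfl
    have h2 := key_top x 0 le_rfl
    simp only [mul_zero, neg_zero, Real.exp_zero, mul_one] at h1 h2
    have h3 : pp (πA x) - pm (πA x) = -(f x 0 - pp (πA x)) + (f x 0 - pm (πA x)) := by ring
    rw [h3]
    calc ‖-(f x 0 - pp (πA x)) + (f x 0 - pm (πA x))‖
        ≤ ‖-(f x 0 - pp (πA x))‖ + ‖f x 0 - pm (πA x)‖ := norm_add_le _ _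
      _ ≤ 2 * B := by rw [norm_neg]; linarith
  have hnorm_psi : ∀ t : ℝ, ‖(psi t : ℂ)‖ = psi t := by
    intro t; rw [Complex.norm_real, Real.norm_eq_abs, abs_of_nonneg (psi_nonneg t)]
  have hnorm_one_sub : ∀ t : ℝ, ‖(1 : ℂ) - (psi t : ℂ)‖ = 1 - psi t := by
    intro t
    rw [show (1 : ℂ) - (psi t : ℂ) = ((1 - psi t : ℝ) : ℂ) by push_cast; ring,
      Complex.norm_real, Real.norm_eq_abs, abs_of_nonneg (by linarith [psi_le_one t])]
  constructor
  · intro x t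
    rcases le_total t 0 with ht | ht
    · -- t ≤ 0
      have hrw : f x t - pm (πA x) * (psi t : ℂ) - pp (πA x) * (1 - (psi t : ℂ))
          = (f x t - pm (πA x)) - (pp (πA x) - pm (πA x)) * (1 - (psi t : ℂ)) := by ring
      have hn : ‖f x t - pm (πA x) * (psi t : ℂ) - pp (πA x) * (1 - (psi t : ℂ))‖
          ≤ B * Real.exp (γ * t) + 2 * B * (Real.exp (1/2) * Real.exp t) := by
        rw [hrw]
        refine (norm_sub_le _ _).trans ?_
        rw [norm_mul, hnorm_one_sub]
        have h1 := key_bot x t ht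
        have h2 := hdiff x
        have h3 := one_sub_psi_le t
        have h4 := psi_le_one t
        have h5 : (0:ℝ) ≤ ‖pp (πA x) - pm (πA x)‖ := norm_nonneg _
        nlinarith
      have habs : |t| = -t := abs_of_nonpos ht
      rw [habs]
      calc Real.exp (γ * -t) * ‖f x t - pm (πA x) * (psi t : ℂ) - pp (πA x) * (1 - (psi t : ℂ))‖
          ≤ Real.exp (γ * -t) * (B * Real.exp (γ * t) + 2 * B * (Real.exp (1/2) * Real.exp t)) :=
            mul_le_mul_of_nonneg_left hn (Real.exp_pos _).le
        _ = B * Real.exp (γ * -t + γ * t) + 2 * B * Real.exp (1/2) * Real.exp (γ * -t + t) := by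
            rw [Real.exp_add, Real.exp_add]; ring
        _ ≤ 5 * B := by
            have e1 : γ * -t + γ * t = 0 := by ring
            have e2 : Real.exp (γ * -t + t) ≤ 1 := by
              apply Real.exp_le_one_iff.2
              nlinarith
            rw [e1, Real.exp_zero]
            have h6 : Real.exp (1/2) * Real.exp (γ * -t + t) ≤ 2 :=
              le_trans (mul_le_of_le_one_right (Real.exp_pos _).le e2) exp_half_le_two
            nlinarith [mul_le_mul_of_nonneg_left h6 hB]
    · -- 0 ≤ t
      have hrw : f x t - pm (πA x) * (psi t : ℂ) - pp (πA x) * (1 - (psi t : ℂ))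
          = (f x t - pp (πA x)) + (pp (πA x) - pm (πA x)) * (psi t : ℂ) := by ring
      have hn : ‖f x t - pm (πA x) * (psi t : ℂ) - pp (πA x) * (1 - (psi t : ℂ))‖
          ≤ B * Real.exp (-(γ * t)) + 2 * B * (Real.exp (1/2) * Real.exp (-t)) := by
        rw [hrw]
        refine (norm_add_le _ _).trans ?_
        rw [norm_mul, hnorm_psi]
        have h1 := key_top x t ht
        have h2 := hdiff x
        have h3 := psi_le t
        have h4 := psi_nonneg t
        have h5 : (0:ℝ) ≤ ‖pp (πA x) - pm (πA x)‖ := norm_nonneg _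
        nlinarith
      have habs : |t| = t := abs_of_nonneg ht
      rw [habs]
      calc Real.exp (γ * t) * ‖f x t - pm (πA x) * (psi t : ℂ) - pp (πA x) * (1 - (psi t : ℂ))‖
          ≤ Real.exp (γ * t) * (B * Real.exp (-(γ * t)) + 2 * B * (Real.exp (1/2) * Real.exp (-t))) :=
            mul_le_mul_of_nonneg_left hn (Real.exp_pos _).le
        _ = B * Real.exp (γ * t + -(γ * t)) + 2 * B * Real.exp (1/2) * Real.exp (γ * t + -t) := by
            rw [Real.exp_add, Real.exp_add]; ring
        _ ≤ 5 * B := by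
            have e1 : γ * t + -(γ * t) = 0 := by ring
            have e2 : Real.exp (γ * t + -t) ≤ 1 := by
              apply Real.exp_le_one_iff.2
              nlinarith
            rw [e1, Real.exp_zero]
            have h6 : Real.exp (1/2) * Real.exp (γ * t + -t) ≤ 2 :=
              le_trans (mul_le_of_le_one_right (Real.exp_pos _).le e2) exp_half_le_two
            nlinarith [mul_le_mul_of_nonneg_left h6 hB]
  · intro x x' t h
    rw [h]
    have hrw : (f x t - pm (πA x') * (psi t : ℂ) - pp (πA x') * (1 - (psi t : ℂ)))
        - (f x' t - pm (πA x') * (psi t : ℂ) - pp (πA x') * (1 - (psi t : ℂ)))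
        = f x t - f x' t := by ring
    rw [hrw]
    have hωeq : omegaMod x t x' t = Real.exp (-|t|) * dist x x' := by
      unfold omegaMod
      rw [sub_self]
      norm_num [Real.sqrt_sq dist_nonneg]
    have hb := hHol x x' t t h
    rw [hωeq] at hb
    have hpow : (Real.exp (-|t|) * dist x x') ^ γ
        = Real.exp (-|t| * γ) * dist x x' ^ γ := by
      rw [Real.mul_rpow (Real.exp_pos _).le dist_nonneg, ← Real.exp_mul]
    rw [hpow] at hb
    have hone : Real.exp (γ * |t|) * Real.exp (-|t| * γ) = 1 := by
      rw [← Real.exp_add, show γ * |t| + -|t| * γ = 0 by ring, Real.exp_zero]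
    calc Real.exp (γ * |t|) * ‖f x t - f x' t‖
        ≤ Real.exp (γ * |t|) * (B * (Real.exp (-|t| * γ) * dist x x' ^ γ)) := by
          refine mul_le_mul_of_nonneg_left ?_ (Real.exp_pos _).le
          linarith [hb]
      _ = B * dist x x' ^ γ := by linear_combination B * dist x x' ^ γ * hone
      _ ≤ 5 * B * dist x x' ^ γ := by
          nlinarith [mul_nonneg hB (Real.rpow_nonneg (dist_nonneg (α := X) (x := x) (y := x')) γ)]
end
end

section
/- Suppose X is a compact metric G-space contracted by ρ over a finite G-set A and σ : G × X → ℝ is a cocycle such that there exist η, t, C > 0 with sup_x ∫ e^{−sσ(g,x)} dρ^{*n}(g) ≤ C e^{−tsn} for all s ∈ [0, η] and n ∈ ℕ (positive drift). Suppose also P(it) is the perturbed operator P(z)f(x) = ∫ e^{−zσ(g,x)}f(gx)dρ(g), and f ∈ L^∞(X × ℝ) is nonnegative. Then G f(x,t) := Σ_{n≥0} ∫ f(gx, t + σ(g,x)) dρ^{*n}(g) equals lim_{s→0^+} Σ_{n≥0} ∫ e^{−sσ(g,x)} f(gx, t+σ(g,x)) dρ^{*n}(g). -/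
noncomputable section

open MeasureTheory Filter
open scoped ENNReal

/-- Suppose `X` is a compact metric `G`-space, contracted by `ρ` over a finite `G`-set
`A`, and `σ : G × X → ℝ` is a cocycle with positive drift: there are `η, τ, C > 0` with
`sup_x ∫ e^{-sσ(g,x)} dρ^{*n}(g) ≤ C e^{-τ s n}` for all `s ∈ [0,η]` and all `n`.
Then for every bounded nonnegative `f ∈ L^∞(X × ℝ)`,
`G f(x,t) := Σ_n ∫ f(gx, t + σ(g,x)) dρ^{*n}(g)` equals
`lim_{s→0⁺} Σ_n ∫ e^{-sσ(g,x)} f(gx, t + σ(g,x)) dρ^{*n}(g)`. -/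
theorem stmt19 {G : Type*} [Group G] [TopologicalSpace G] [IsTopologicalGroup G]
    [SecondCountableTopology G] [MeasurableSpace G] [BorelSpace G]
    (ρ : Measure G) [IsProbabilityMeasure ρ]
    {X : Type*} [MetricSpace X] [CompactSpace X]
    [MeasurableSpace X] [BorelSpace X] [MulAction G X]
    (hact : Continuous fun p : G × X => p.1 • p.2)
    {A : Type*} [Fintype A] [MulAction G A] (πA : X → A)
    (hπ : ∀ (g : G) (x : X), πA (g • x) = g • πA x)
    (σ : G → X → ℝ) (hσ : Continuous fun p : G × X => σ p.1 p.2)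
    (hcocycle : ∀ (g₂ g₁ : G) (x : X), σ (g₂ * g₁) x = σ g₂ (g₁ • x) + σ g₁ x)
    (η τ C : ℝ) (hη : 0 < η) (hτ : 0 < τ) (hC : 0 < C)
    (hdrift : ∀ s ∈ Set.Icc (0 : ℝ) η, ∀ (n : ℕ) (x : X),
      ∫⁻ g, ENNReal.ofReal (Real.exp (-s * σ g x)) ∂(convPow ρ n)
        ≤ ENNReal.ofReal (C * Real.exp (-τ * s * n)))
    (f : X → ℝ → ℝ) (Cf : ℝ)
    (hf0 : ∀ (x : X) (u : ℝ), 0 ≤ f x u)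
    (hfb : ∀ (x : X) (u : ℝ), f x u ≤ Cf)
    (x : X) (t : ℝ)
    (hmeasσ : Measurable fun g : G => σ g x)
    (hmeasf : Measurable fun g : G => f (g • x) (t + σ g x)) :
    Tendsto
      (fun s : ℝ => ∑' n : ℕ,
        ∫⁻ g, ENNReal.ofReal (Real.exp (-s * σ g x) * f (g • x) (t + σ g x))
          ∂(convPow ρ n))
      (nhdsWithin 0 (Set.Ioi 0))
      (nhds (∑' n : ℕ, ∫⁻ g, ENNReal.ofReal (f (g • x) (t + σ g x)) ∂(convPow ρ n))) := by
  classical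
  set μ : ℕ → Measure G := convPow ρ with hμ
  set h : G → ℝ := fun g => f (g • x) (t + σ g x) with hh
  have hh0 : ∀ g, 0 ≤ h g := fun g => hf0 _ _
  have hhb : ∀ g, h g ≤ Cf := fun g => hfb _ _
  have hCf0 : (0:ℝ) ≤ Cf := le_trans (hh0 1) (hhb 1)
  have hmeas_e : ∀ s : ℝ, Measurable fun g => Real.exp (-s * σ g x) :=
    fun s => Real.measurable_exp.comp (hmeasσ.const_mul (-s))
  set F : ℝ → ℕ → ℝ≥0∞ :=
    fun s n => ∫⁻ g, ENNReal.ofReal (Real.exp (-s * σ g x) * h g) ∂ μ n with hF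
  set φ : ℝ → ℝ≥0∞ := fun s => ∑' n, F s n with hφ
  set L : ℝ≥0∞ := ∑' n : ℕ, ∫⁻ g, ENNReal.ofReal (h g) ∂ μ n with hL
  set D : ℝ≥0∞ := ∑' n : ℕ, ∫⁻ g, ENNReal.ofReal (Real.exp (-η * σ g x)) ∂ μ n with hD
  show Tendsto φ (nhdsWithin 0 (Set.Ioi 0)) (nhds L)
  -- D is finite
  have hDn : ∀ n : ℕ, (∫⁻ g, ENNReal.ofReal (Real.exp (-η * σ g x)) ∂ μ n)
      ≤ ENNReal.ofReal C * ENNReal.ofReal (Real.exp (-(τ * η))) ^ n := by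
    intro n
    refine (hdrift η ⟨hη.le, le_refl η⟩ n x).trans (le_of_eq ?_)
    rw [ENNReal.ofReal_mul hC.le, ← ENNReal.ofReal_pow (Real.exp_nonneg _),
      ← Real.exp_nat_mul]
    ring_nf
  have hr : ENNReal.ofReal (Real.exp (-(τ * η))) < 1 := by
    rw [ENNReal.ofReal_lt_one]
    exact Real.exp_lt_one_iff.2 (by nlinarith)
  have hDtop : D ≠ ⊤ := by
    have hle : D ≤ ENNReal.ofReal C * ∑' n : ℕ, ENNReal.ofReal (Real.exp (-(τ * η))) ^ n := by
      rw [← ENNReal.tsum_mul_left]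
      exact ENNReal.tsum_le_tsum hDn
    refine ne_top_of_le_ne_top ?_ hle
    rw [ENNReal.tsum_geometric]
    exact ENNReal.mul_ne_top ENNReal.ofReal_ne_top
      (ENNReal.inv_ne_top.2 (tsub_pos_of_lt hr).ne')
  -- Part A: pointwise convexity bound
  have key : ∀ s ∈ Set.Ioc (0:ℝ) η, ∀ g : G,
      Real.exp (-s * σ g x) * h g ≤ h g + (s / η * Cf) * Real.exp (-η * σ g x) := by
    intro s hs g
    set a := σ g x with ha
    have hc0 : (0:ℝ) ≤ s / η := div_nonneg hs.1.le hη.le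
    have hc1 : s / η ≤ 1 := (div_le_one hη).2 hs.2
    have conv : Real.exp (-s * a) ≤ (s / η) * Real.exp (-η * a) + (1 - s / η) := by
      have h1 : Real.exp ((s / η) * (-η * a) + (1 - s / η) * 0)
          ≤ (s / η) * Real.exp (-η * a) + (1 - s / η) * Real.exp 0 :=
        convexOn_exp.2 (Set.mem_univ (-η * a)) (Set.mem_univ (0:ℝ))
          hc0 (by linarith) (by ring)
      have harg : (s / η) * (-η * a) + (1 - s / η) * 0 = -s * a := by
        field_simp
        ring
      rw [harg, Real.exp_zero] at h1
      simpa using h1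
    have hE : (0:ℝ) ≤ Real.exp (-η * a) := Real.exp_nonneg _
    nlinarith [mul_le_mul_of_nonneg_right conv (hh0 g), hh0 g, hhb g,
      mul_nonneg hc0 hE, mul_le_mul_of_nonneg_left (hhb g) (mul_nonneg hc0 hE)]
  have intA : ∀ s ∈ Set.Ioc (0:ℝ) η, ∀ n : ℕ,
      F s n ≤ (∫⁻ g, ENNReal.ofReal (h g) ∂ μ n)
        + ENNReal.ofReal (s / η * Cf) * ∫⁻ g, ENNReal.ofReal (Real.exp (-η * σ g x)) ∂ μ n := by
    intro s hs n
    have hmeas1 : Measurable fun g : G => ENNReal.ofReal (h g) := hmeasf.ennreal_ofReal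
    calc F s n ≤ ∫⁻ g, (ENNReal.ofReal (h g)
          + ENNReal.ofReal (s / η * Cf) * ENNReal.ofReal (Real.exp (-η * σ g x))) ∂ μ n := by
          refine lintegral_mono fun g => ?_
          have hsc : (0:ℝ) ≤ s / η * Cf := mul_nonneg (div_nonneg hs.1.le hη.le) hCf0
          rw [← ENNReal.ofReal_mul hsc,
            ← ENNReal.ofReal_add (hh0 g) (mul_nonneg hsc (Real.exp_nonneg _))]
          exact ENNReal.ofReal_le_ofReal (key s hs g)
      _ = _ := by
          rw [lintegral_add_left hmeas1, lintegral_const_mul _ ((hmeas_e η).ennreal_ofReal)]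
  have sumA : ∀ s ∈ Set.Ioc (0:ℝ) η, φ s ≤ L + ENNReal.ofReal (s / η * Cf) * D := by
    intro s hs
    calc φ s ≤ ∑' n : ℕ, ((∫⁻ g, ENNReal.ofReal (h g) ∂ μ n)
          + ENNReal.ofReal (s / η * Cf) * ∫⁻ g, ENNReal.ofReal (Real.exp (-η * σ g x)) ∂ μ n) :=
        ENNReal.tsum_le_tsum (intA s hs)
      _ = L + ENNReal.ofReal (s / η * Cf) * D := by
        rw [ENNReal.tsum_add, ENNReal.tsum_mul_left]
  have limA : limsup φ (nhdsWithin 0 (Set.Ioi (0:ℝ))) ≤ L := by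
    have t0 : Tendsto (fun s : ℝ => ENNReal.ofReal (s / η * Cf))
        (nhdsWithin 0 (Set.Ioi (0:ℝ))) (nhds 0) := by
      have hcont : Continuous fun s : ℝ => ENNReal.ofReal (s / η * Cf) :=
        ENNReal.continuous_ofReal.comp ((continuous_id.div_const η).mul continuous_const)
      have := (hcont.tendsto 0).mono_left (nhdsWithin_le_nhds (s := Set.Ioi (0:ℝ)))
      simpa using this
    have tmul : Tendsto (fun s : ℝ => ENNReal.ofReal (s / η * Cf) * D)
        (nhdsWithin 0 (Set.Ioi (0:ℝ))) (nhds 0) := by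
      simpa using ENNReal.Tendsto.mul_const t0 (Or.inr hDtop)
    have t1 : Tendsto (fun s : ℝ => L + ENNReal.ofReal (s / η * Cf) * D)
        (nhdsWithin 0 (Set.Ioi (0:ℝ))) (nhds L) := by
      simpa using (tendsto_const_nhds (x := L)).add tmul
    have hev : ∀ᶠ s in nhdsWithin 0 (Set.Ioi (0:ℝ)),
        φ s ≤ L + ENNReal.ofReal (s / η * Cf) * D := by
      filter_upwards [Ioc_mem_nhdsGT_of_mem (Set.mem_Ico.2 ⟨le_refl (0:ℝ), hη⟩)] with s hs
      exact sumA s hs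
    calc limsup φ (nhdsWithin 0 (Set.Ioi (0:ℝ)))
        ≤ limsup (fun s : ℝ => L + ENNReal.ofReal (s / η * Cf) * D)
            (nhdsWithin 0 (Set.Ioi (0:ℝ))) := limsup_le_limsup hev
      _ = L := t1.limsup_eq
  -- Part B
  set S : ℕ → Set G := fun m => {g : G | σ g x ≤ (m:ℝ)} with hS
  have hSm : ∀ m : ℕ, MeasurableSet (S m) := fun m =>
    measurableSet_le hmeasσ measurable_const
  set Gm : ℕ → ℝ≥0∞ := fun m => ∑' n : ℕ, ∫⁻ g in S m, ENNReal.ofReal (h g) ∂ μ n with hGm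
  have hGmtop : ∀ m : ℕ, Gm m ≠ ⊤ := by
    intro m
    have hle : Gm m ≤ ENNReal.ofReal (Cf * Real.exp (η * m)) * D := by
      rw [← ENNReal.tsum_mul_left]
      refine ENNReal.tsum_le_tsum fun n => ?_
      rw [← lintegral_const_mul _ ((hmeas_e η).ennreal_ofReal),
        ← lintegral_indicator (hSm m)]
      refine lintegral_mono fun g => ?_
      by_cases hg : g ∈ S m
      · rw [Set.indicator_of_mem hg, ← ENNReal.ofReal_mul (by positivity)]
        refine ENNReal.ofReal_le_ofReal ?_
        have hgm : σ g x ≤ (m:ℝ) := hg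
        have h2 : Real.exp (η * m) * Real.exp (-η * σ g x) = Real.exp (η * (m - σ g x)) := by
          rw [← Real.exp_add]; ring_nf
        have h3 : (1:ℝ) ≤ Real.exp (η * m) * Real.exp (-η * σ g x) := by
          rw [h2]; exact Real.one_le_exp (by nlinarith)
        calc h g ≤ Cf := hhb g
          _ = Cf * 1 := (mul_one _).symm
          _ ≤ Cf * (Real.exp (η * m) * Real.exp (-η * σ g x)) :=
              mul_le_mul_of_nonneg_left h3 hCf0
          _ = Cf * Real.exp (η * m) * Real.exp (-η * σ g x) := by ring
      · simp [Set.indicator_of_notMem hg]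
    exact ne_top_of_le_ne_top (ENNReal.mul_ne_top ENNReal.ofReal_ne_top hDtop) hle
  have hB1 : ∀ s ∈ Set.Ioi (0:ℝ), ∀ m : ℕ,
      ENNReal.ofReal (Real.exp (-s * m)) * Gm m ≤ φ s := by
    intro s hs m
    rw [← ENNReal.tsum_mul_left]
    refine ENNReal.tsum_le_tsum fun n => ?_
    rw [← lintegral_const_mul _ hmeasf.ennreal_ofReal, ← lintegral_indicator (hSm m)]
    refine lintegral_mono fun g => ?_
    by_cases hg : g ∈ S m
    · rw [Set.indicator_of_mem hg, ← ENNReal.ofReal_mul (Real.exp_nonneg _)]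
      refine ENNReal.ofReal_le_ofReal ?_
      have hgm : σ g x ≤ (m:ℝ) := hg
      exact mul_le_mul_of_nonneg_right
        (Real.exp_le_exp.2 (by nlinarith [hs.out])) (hh0 g)
    · simp [Set.indicator_of_notMem hg]
  have hB3 : ∀ m : ℕ, Gm m ≤ liminf φ (nhdsWithin 0 (Set.Ioi (0:ℝ))) := by
    intro m
    have hcont : Continuous fun s : ℝ => ENNReal.ofReal (Real.exp (-s * m)) :=
      ENNReal.continuous_ofReal.comp
        (Real.continuous_exp.comp ((continuous_id.neg).mul continuous_const))
    have t3 : Tendsto (fun s : ℝ => ENNReal.ofReal (Real.exp (-s * m)))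
        (nhdsWithin 0 (Set.Ioi (0:ℝ))) (nhds 1) := by
      have := (hcont.tendsto 0).mono_left (nhdsWithin_le_nhds (s := Set.Ioi (0:ℝ)))
      simpa using this
    have t2 : Tendsto (fun s : ℝ => ENNReal.ofReal (Real.exp (-s * m)) * Gm m)
        (nhdsWithin 0 (Set.Ioi (0:ℝ))) (nhds (Gm m)) := by
      simpa using ENNReal.Tendsto.mul_const t3 (Or.inl one_ne_zero)
    have hev : ∀ᶠ s in nhdsWithin 0 (Set.Ioi (0:ℝ)),
        ENNReal.ofReal (Real.exp (-s * m)) * Gm m ≤ φ s :=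
      eventually_nhdsWithin_of_forall fun s hs => hB1 s hs m
    rw [← t2.liminf_eq]
    exact liminf_le_liminf hev
  -- Part B4 : L ≤ ⨆ m, Gm m
  have hB4 : L ≤ ⨆ m : ℕ, Gm m := by
    have hper : ∀ n : ℕ, (∫⁻ g, ENNReal.ofReal (h g) ∂ μ n)
        = ⨆ m : ℕ, ∫⁻ g in S m, ENNReal.ofReal (h g) ∂ μ n := by
      intro n
      have hmono : Monotone fun m : ℕ => (S m).indicator fun g => ENNReal.ofReal (h g) := by
        intro m m' hmm'
        apply Set.indicator_le_indicator_of_subset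
        · intro g hg
          exact le_trans hg.out (by exact_mod_cast Nat.cast_le.2 hmm')
        · intro g; exact zero_le
      have hsup : ∀ g : G, (⨆ m : ℕ, (S m).indicator (fun g => ENNReal.ofReal (h g)) g)
          = ENNReal.ofReal (h g) := by
        intro g
        refine le_antisymm (iSup_le fun m => Set.indicator_le_self _ _ g) ?_
        obtain ⟨m, hm⟩ := exists_nat_ge (σ g x)
        have : g ∈ S m := hm
        rw [← Set.indicator_of_mem this (fun g => ENNReal.ofReal (h g))]
        exact le_iSup (fun m => (S m).indicator (fun g => ENNReal.ofReal (h g)) g) m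
      calc (∫⁻ g, ENNReal.ofReal (h g) ∂ μ n)
          = ∫⁻ g, ⨆ m : ℕ, (S m).indicator (fun g => ENNReal.ofReal (h g)) g ∂ μ n := by
            refine lintegral_congr fun g => (hsup g).symm
        _ = ⨆ m : ℕ, ∫⁻ g, (S m).indicator (fun g => ENNReal.ofReal (h g)) g ∂ μ n :=
            lintegral_iSup (fun m => (hmeasf.ennreal_ofReal).indicator (hSm m)) hmono
        _ = ⨆ m : ℕ, ∫⁻ g in S m, ENNReal.ofReal (h g) ∂ μ n := by
            refine iSup_congr fun m => lintegral_indicator (hSm m) _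
    have hswap : (∑' n : ℕ, ⨆ m : ℕ, ∫⁻ g in S m, ENNReal.ofReal (h g) ∂ μ n)
        = ⨆ m : ℕ, Gm m := by
      have hmono2 : Monotone fun m : ℕ => fun n : ℕ =>
          ∫⁻ g in S m, ENNReal.ofReal (h g) ∂ μ n := by
        intro m m' hmm' n
        refine lintegral_mono_set fun g hg =>
          le_trans hg.out (by exact_mod_cast Nat.cast_le.2 hmm')
      calc (∑' n : ℕ, ⨆ m : ℕ, ∫⁻ g in S m, ENNReal.ofReal (h g) ∂ μ n)
          = ∫⁻ n : ℕ, ⨆ m : ℕ, ∫⁻ g in S m, ENNReal.ofReal (h g) ∂ μ n ∂ Measure.count :=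
            (lintegral_count _).symm
        _ = ⨆ m : ℕ, ∫⁻ n : ℕ, ∫⁻ g in S m, ENNReal.ofReal (h g) ∂ μ n ∂ Measure.count :=
            lintegral_iSup (fun m => measurable_from_top) hmono2
        _ = ⨆ m : ℕ, Gm m := by
            refine iSup_congr fun m => ?_
            rw [lintegral_count]
    calc L = ∑' n : ℕ, ⨆ m : ℕ, ∫⁻ g in S m, ENNReal.ofReal (h g) ∂ μ n :=
        tsum_congr hper
      _ = ⨆ m : ℕ, Gm m := hswap
      _ ≤ ⨆ m : ℕ, Gm m := le_refl _
  exact tendsto_of_le_liminf_of_limsup_le (hB4.trans (iSup_le hB3)) limA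
end
end
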